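/- Let R be a commutative ring with unity and x, y ∈ R. Then the principal ideals (x) and (y) are equal if and only if there exists u ∈ R such that y = xu and [u] is a unit of R/Ann(x). (Equivalently, the J-class of x in the multiplicative semigroup of R is exactly the set {xu : u ∈ R, [u] a unit of R/Ann(x)}.) -/

import Mathlib

/-- The annihilator `Ann(x) = {y ∈ R | x * y = 0}` of an element `x` of a
commutative ring `R`, as an ideal of `R`. -/
def ann {R : Type*} [CommRing R] (x : R) : Ideal R where
  carrier := {y : R | x * y = 0}
  add_mem' := by
    intro a b ha hb
    simp only [Set.mem_setOf_eq] at *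
    rw [mul_add, ha, hb, add_zero]
  zero_mem' := by simp
  smul_mem' := by
    intro c y hy
    simp only [smul_eq_mul, Set.mem_setOf_eq] at *
    rw [mul_comm c y, ← mul_assoc, hy, zero_mul]


lemma mem_ann_iff {R : Type*} [CommRing R] (x y : R) : y ∈ ann x ↔ x * y = 0 := Iff.rfl

/-- `(x) = (y)` iff `y = xu` for some `u` whose image in `R/Ann(x)` is a unit;
i.e. the `J`-class of `x` is `{xu : u ∈ R, [u] a unit of R/Ann(x)}`. -/
theorem span_singleton_eq_iff_exists_unit_mod_ann {R : Type*} [CommRing R] (x y : R) :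
    Ideal.span {x} = Ideal.span {y} ↔
      ∃ u : R, y = x * u ∧ IsUnit (Ideal.Quotient.mk (ann x) u) := by
  constructor
  · intro h
    have hy : y ∈ Ideal.span ({x} : Set R) := h ▸ Ideal.mem_span_singleton_self y
    have hx : x ∈ Ideal.span ({y} : Set R) := h.symm ▸ Ideal.mem_span_singleton_self x
    obtain ⟨u, hu⟩ := Ideal.mem_span_singleton.mp hy
    obtain ⟨v, hv⟩ := Ideal.mem_span_singleton.mp hx
    refine ⟨u, hu, IsUnit.of_mul_eq_one (Ideal.Quotient.mk (ann x) v) ?_⟩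
    rw [← map_mul, ← map_one (Ideal.Quotient.mk (ann x)), Ideal.Quotient.mk_eq_mk_iff_sub_mem]
    rw [mem_ann_iff]
    have : x = x * (u * v) := by rw [← mul_assoc, ← hu, ← hv]
    rw [mul_sub, mul_one, ← this, sub_self]
  · rintro ⟨u, rfl, hu⟩
    obtain ⟨b, hb⟩ := hu.exists_right_inv
    obtain ⟨v, rfl⟩ := Ideal.Quotient.mk_surjective b
    rw [← map_mul, ← map_one (Ideal.Quotient.mk (ann x)), Ideal.Quotient.mk_eq_mk_iff_sub_mem, mem_ann_iff, mul_sub, mul_one, sub_eq_zero] at hb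
    apply le_antisymm <;> rw [Ideal.span_singleton_le_span_singleton]
    · exact ⟨v, by rw [mul_assoc, hb]⟩
    · exact ⟨u, rfl⟩
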